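/- arXiv:1510.08592 — 2 statements merged into one kernel-verified Lean document; each statement's English description precedes it below -/
import Mathlib

section
/- Let K, D, λ, m be positive integers with D < K, D + λ dividing K, and λ dividing D; set p = D/λ. Consider the index coding problem with mK messages and antidotes A'_k = {k + iK : 1 ≤ i ≤ m−1} ∪ {k + jλ + iK : 1 ≤ j ≤ p, 0 ≤ i ≤ m−1} ⊆ ZMod (mK) for each k ∈ ZMod (mK). Then the set C^(m) = { Σ_{t=0}^{p} e'_{i+(j+t)λ} : 1 ≤ i ≤ λ, 0 ≤ j ≤ (K−D−λ)/λ }, where e'_l = Σ_{t=0}^{m−1} e_{l+tK} ∈ V_{mK}, is a valid scalar linear index code of length K − D for this problem, and moreover every valid scalar linear index code for this problem has length at least K − D. -/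
/-- Standard basis vector `e_j` of `V_n = ZMod n → GF(2)`. -/
def stdVec (n : ℕ) (j : ZMod n) : ZMod n → ZMod 2 := fun i => if i = j then 1 else 0

/-- `C` is a valid scalar linear index code over `GF(2)` for the index coding problem
with `n` messages and antidote pattern `A`. -/
def IsIndexCode (n : ℕ) (A : ZMod n → Set (ZMod n)) (C : Set (ZMod n → ZMod 2)) : Prop :=
  C.Finite ∧ ∀ k : ZMod n,
    stdVec n k ∈ Submodule.span (ZMod 2) (C ∪ (stdVec n '' A k))

/-- `e'_l = Σ_{t=0}^{m-1} e_{l+tK} ∈ V_{mK}`. -/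
def eSum (K m : ℕ) (l : ℕ) : ZMod (m * K) → ZMod 2 :=
  ∑ t ∈ Finset.range m, stdVec (m * K) ((l + t * K : ℕ))

private lemma shiftSum {β : Type*} [AddCommGroup β] (g : ℕ → β) (N : ℕ) (hg : g N = g 0) :
    ∑ r ∈ Finset.range N, g (r + 1) = ∑ r ∈ Finset.range N, g r := by
  have h1 := Finset.sum_range_succ' g N
  rw [Finset.sum_range_succ, hg] at h1
  exact add_right_cancel h1.symm

private lemma sumRangeMul {β : Type*} [AddCommMonoid β] (f : ℕ → β) (M c : ℕ) :
    ∑ r ∈ Finset.range (M * c), f r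
      = ∑ u ∈ Finset.range M, ∑ t ∈ Finset.range c, f (u * c + t) := by
  induction M with
  | zero => simp
  | succ M ih =>
      rw [Finset.sum_range_succ, ← ih, add_mul, one_mul, Finset.sum_range_add]

private lemma eSum_shift (K m l : ℕ) : eSum K m (l + K) = eSum K m l := by
  unfold eSum
  calc ∑ t ∈ Finset.range m, stdVec (m*K) ((l + K + t * K : ℕ))
      = ∑ t ∈ Finset.range m, stdVec (m*K) ((l + (t+1) * K : ℕ)) := by
        refine Finset.sum_congr rfl fun t _ =>
          congrArg (fun x : ℕ => stdVec (m*K) (x : ZMod (m*K))) (by ring)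
    _ = ∑ t ∈ Finset.range m, stdVec (m*K) ((l + t * K : ℕ)) := by
        refine shiftSum (fun t => stdVec (m*K) ((l + t * K : ℕ))) m ?_
        have h : ((l + m*K : ℕ) : ZMod (m*K)) = ((l + 0*K : ℕ) : ZMod (m*K)) := by
          rw [Nat.cast_add, Nat.cast_add, ZMod.natCast_self, Nat.zero_mul, Nat.cast_zero,
            add_zero]
        simpa using congrArg (stdVec (m*K)) h

private lemma eSum_shift_mul (K m l c : ℕ) : eSum K m (l + c * K) = eSum K m l := by
  induction c with
  | zero => simp
  | succ c ih =>
      have h : l + (c+1)*K = (l + c*K) + K := by ring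
      rw [h, eSum_shift, ih]

private lemma eSum_congr (K m a b c₁ c₂ : ℕ) (h : a + c₁ * K = b + c₂ * K) :
    eSum K m a = eSum K m b := by
  rw [← eSum_shift_mul K m a c₁, h, eSum_shift_mul]

private lemma eSum_split (K m l : ℕ) (hm : 0 < m) :
    eSum K m l = ∑ t ∈ Finset.range (m-1), stdVec (m*K) ((l + (t+1)*K : ℕ))
      + stdVec (m*K) ((l : ℕ)) := by
  obtain ⟨m', hm'⟩ : ∃ m', m = m' + 1 := ⟨m - 1, by omega⟩
  subst hm'
  rw [eSum, Finset.sum_range_succ']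
  simp only [Nat.add_sub_cancel]
  congr 2
  · norm_num

/-- **Class (iii) lifted (Corollary 6).** For `D + λ ∣ K`, `λ ∣ D`, `D < K` and
`p = D/λ`, the lifted code `{Σ_{t=0}^{p} e'_{i+(j+t)λ} : 1 ≤ i ≤ λ, 0 ≤ j ≤ (K-D-λ)/λ}`
is a valid scalar linear index code of optimal length `K - D` for the lifted problem on
`m*K` messages with antidotes
`{k+iK : 1 ≤ i ≤ m-1} ∪ {k+jλ+iK : 1 ≤ j ≤ p, 0 ≤ i ≤ m-1}`. -/
theorem lifted_code_class_iii (K D lam m : ℕ) (hK : 0 < K) (hD : 0 < D)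
    (hlam : 0 < lam) (hm : 0 < m) (hDK : D < K)
    (hdvd1 : (D + lam) ∣ K) (hdvd2 : lam ∣ D) :
    (IsIndexCode (m * K)
        (fun k => {x | ∃ i : ℕ, 1 ≤ i ∧ i ≤ m - 1 ∧ x = k + (i * K : ℕ)} ∪
          {x | ∃ j i : ℕ, 1 ≤ j ∧ j ≤ D / lam ∧ i ≤ m - 1 ∧
            x = k + (j * lam + i * K : ℕ)})
        {v | ∃ i j : ℕ, 1 ≤ i ∧ i ≤ lam ∧ j ≤ (K - D - lam) / lam ∧
          v = ∑ t ∈ Finset.range (D / lam + 1), eSum K m (i + (j + t) * lam)} ∧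
      ({v | ∃ i j : ℕ, 1 ≤ i ∧ i ≤ lam ∧ j ≤ (K - D - lam) / lam ∧
          v = ∑ t ∈ Finset.range (D / lam + 1), eSum K m (i + (j + t) * lam)} :
        Set (ZMod (m * K) → ZMod 2)).ncard = K - D) ∧
    (∀ C' : Set (ZMod (m * K) → ZMod 2),
      IsIndexCode (m * K)
        (fun k => {x | ∃ i : ℕ, 1 ≤ i ∧ i ≤ m - 1 ∧ x = k + (i * K : ℕ)} ∪
          {x | ∃ j i : ℕ, 1 ≤ j ∧ j ≤ D / lam ∧ i ≤ m - 1 ∧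
            x = k + (j * lam + i * K : ℕ)}) C' →
        K - D ≤ C'.ncard) := by
  have hmK : 0 < m * K := Nat.mul_pos hm hK
  haveI : NeZero (m * K) := ⟨hmK.ne'⟩
  have hKmK : K ≤ m * K := Nat.le_mul_of_pos_left K hm
  have hlamD : lam ≤ D := Nat.le_of_dvd hD hdvd2
  set p := D / lam with hpdef
  set q := (K - D - lam) / lam with hqdef
  have hp : p * lam = D := Nat.div_mul_cancel hdvd2
  obtain ⟨M, hMK⟩ := hdvd1
  have hM0 : M ≠ 0 := by rintro rfl; rw [Nat.mul_zero] at hMK; omega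
  obtain ⟨M', rfl⟩ : ∃ M', M = M' + 1 := ⟨M - 1, by omega⟩
  have hNK : (M' + 1) * (p + 1) * lam = K := by
    have h1 : (p+1) * lam = D + lam := by rw [add_mul, one_mul, hp]
    rw [mul_assoc, h1, hMK]; ring
  have hexp : (M'+1)*(p+1) = M'*(p+1) + p + 1 := by ring
  have hq : q = M' * (p + 1) := by
    have h2 : (M'+1)*(p+1)*lam = M'*(p+1)*lam + p*lam + lam := by ring
    have h1 : K - D - lam = M' * (p+1) * lam := by omega
    rw [hqdef, h1, Nat.mul_div_cancel _ hlam]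
  set A : ZMod (m*K) → Set (ZMod (m*K)) :=
    fun k => {x | ∃ i : ℕ, 1 ≤ i ∧ i ≤ m - 1 ∧ x = k + (i * K : ℕ)} ∪
          {x | ∃ j i : ℕ, 1 ≤ j ∧ j ≤ p ∧ i ≤ m - 1 ∧
            x = k + (j * lam + i * K : ℕ)} with hA
  set S : Set (ZMod (m*K) → ZMod 2) :=
    {v | ∃ i j : ℕ, 1 ≤ i ∧ i ≤ lam ∧ j ≤ q ∧
          v = ∑ t ∈ Finset.range (p + 1), eSum K m (i + (j + t) * lam)} with hS
  have hwin : ∀ i s : ℕ, 1 ≤ i → i ≤ lam → s < (M'+1)*(p+1) →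
      (∑ t ∈ Finset.range (p+1), eSum K m (i + (s+t)*lam)) ∈ Submodule.span (ZMod 2) S := by
    intro i s hi1 hi2 hsN
    have hmemS : ∀ j : ℕ, j ≤ M' * (p+1) →
        (∑ t ∈ Finset.range (p+1), eSum K m (i + (j+t)*lam)) ∈ S := by
      intro j hj
      simp only [hS, Set.mem_setOf_eq]
      exact ⟨i, j, hi1, hi2, by omega, rfl⟩
    by_cases hs : s ≤ M' * (p+1)
    · exact Submodule.subset_span (hmemS s hs)
    · push_neg at hs
      have hb1 : 1 ≤ s - M' * (p+1) := by omega
      have hb2 : s - M' * (p+1) ≤ p := by omega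
      set b := s - M' * (p+1) with hbdef
      have hT : ∀ bb : ℕ,
          ∑ u ∈ Finset.range (M'+1), ∑ t ∈ Finset.range (p+1),
              eSum K m (i + ((bb + u*(p+1)) + t)*lam)
            = ∑ r ∈ Finset.range ((M'+1)*(p+1)), eSum K m (i + (bb + r)*lam) := by
        intro bb
        rw [sumRangeMul (fun r => eSum K m (i + (bb + r)*lam)) (M'+1) (p+1)]
        exact Finset.sum_congr rfl fun u _ => Finset.sum_congr rfl fun t _ =>
          congrArg (eSum K m) (by ring)
      have hshift : ∀ bb : ℕ,
          ∑ r ∈ Finset.range ((M'+1)*(p+1)), eSum K m (i + (bb + r)*lam)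
            = ∑ r ∈ Finset.range ((M'+1)*(p+1)), eSum K m (i + r*lam) := by
        intro bb
        induction bb with
        | zero => exact Finset.sum_congr rfl fun r _ => congrArg (eSum K m) (by ring)
        | succ bb ih =>
          rw [← ih]
          have hg : (fun r => eSum K m (i + (bb + r)*lam)) ((M'+1)*(p+1))
              = (fun r => eSum K m (i + (bb + r)*lam)) 0 := by
            show eSum K m (i + (bb + (M'+1)*(p+1))*lam) = eSum K m (i + (bb + 0)*lam)
            have h1 : i + (bb + (M'+1)*(p+1))*lam = (i + (bb+0)*lam) + K := by
              rw [← hNK]; ring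
            rw [h1, eSum_shift]
          have h2 := shiftSum (fun r => eSum K m (i + (bb + r)*lam)) ((M'+1)*(p+1)) hg
          calc ∑ r ∈ Finset.range ((M'+1)*(p+1)), eSum K m (i + (bb + 1 + r)*lam)
              = ∑ r ∈ Finset.range ((M'+1)*(p+1)), eSum K m (i + (bb + (r+1))*lam) :=
                Finset.sum_congr rfl fun r _ => congrArg (eSum K m) (by ring)
            _ = ∑ r ∈ Finset.range ((M'+1)*(p+1)), eSum K m (i + (bb + r)*lam) := h2
      have key : ∑ u ∈ Finset.range (M'+1), ∑ t ∈ Finset.range (p+1),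
            eSum K m (i + ((b + u*(p+1)) + t)*lam)
          = ∑ u ∈ Finset.range (M'+1), ∑ t ∈ Finset.range (p+1),
            eSum K m (i + ((0 + u*(p+1)) + t)*lam) := by
        rw [hT b, hT 0, hshift b, hshift 0]
      rw [Finset.sum_range_succ] at key
      have hbM : b + M' * (p+1) = s := by omega
      rw [hbM] at key
      have hgoal : ∑ t ∈ Finset.range (p+1), eSum K m (i + (s+t)*lam)
          = ∑ u ∈ Finset.range (M'+1), ∑ t ∈ Finset.range (p+1),
              eSum K m (i + ((0 + u*(p+1)) + t)*lam)
            - ∑ u ∈ Finset.range M', ∑ t ∈ Finset.range (p+1),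
              eSum K m (i + ((b + u*(p+1)) + t)*lam) := by
        rw [← key]; abel
      rw [hgoal]
      refine sub_mem
        (Submodule.sum_mem _ fun u hu => Submodule.subset_span (hmemS _ ?_))
        (Submodule.sum_mem _ fun u hu => Submodule.subset_span (hmemS _ ?_))
      · have hu' := Finset.mem_range.mp hu
        have h3 : u * (p+1) ≤ M' * (p+1) := mul_le_mul_left (by omega) (p+1)
        omega
      · have hu' := Finset.mem_range.mp hu
        have h3 : (u+1) * (p+1) ≤ M' * (p+1) := mul_le_mul_left (by omega) (p+1)
        have h4 : (u+1) * (p+1) = u*(p+1) + p + 1 := by ring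
        omega
  have hS_eq : S = ↑((Finset.Icc 1 lam ×ˢ Finset.range (M'*(p+1)+1)).image
      (fun ij : ℕ × ℕ => ∑ t ∈ Finset.range (p+1), eSum K m (ij.1 + (ij.2+t)*lam))) := by
    ext v
    simp only [hS, Set.mem_setOf_eq, Finset.coe_image, Set.mem_image, Finset.mem_coe,
      Finset.mem_product, Finset.mem_Icc, Finset.mem_range]
    constructor
    · rintro ⟨i, j, h1, h2, h3, rfl⟩
      exact ⟨(i, j), ⟨⟨h1, h2⟩, by omega⟩, rfl⟩
    · rintro ⟨⟨i, j⟩, ⟨⟨h1, h2⟩, h3⟩, rfl⟩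
      exact ⟨i, j, h1, h2, by omega, rfl⟩
  have hSfin : S.Finite := by rw [hS_eq]; exact Finset.finite_toSet _
  have hspanS : ∀ k : ZMod (m*K),
      stdVec (m*K) k ∈ Submodule.span (ZMod 2) (S ∪ stdVec (m*K) '' A k) := by
    intro k
    have hkc : ((k.val : ℕ) : ZMod (m*K)) = k := ZMod.natCast_rightInverse k
    obtain ⟨d, r, hkvdr, hrK⟩ : ∃ d r, k.val = K*d + r ∧ r < K :=
      ⟨k.val / K, k.val % K, (Nat.div_add_mod k.val K).symm, Nat.mod_lt _ hK⟩
    obtain ⟨i, s, hi1, hi2, hsN, c₁, c₂, hrep⟩ :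
        ∃ i s : ℕ, 1 ≤ i ∧ i ≤ lam ∧ s < (M'+1)*(p+1) ∧
          ∃ c₁ c₂ : ℕ, i + s*lam + c₁*K = k.val + c₂*K := by
      rcases Nat.eq_zero_or_pos r with hr | hr
      · refine ⟨lam, (M'+1)*(p+1) - 1, hlam, le_rfl, Nat.sub_lt (by positivity) one_pos, d, 1, ?_⟩
        have e0 : ((M'+1)*(p+1) - 1)*lam = (M'+1)*(p+1)*lam - 1*lam := Nat.sub_mul _ _ _
        rw [one_mul] at e0
        have hdK : d*K = K*d := Nat.mul_comm _ _
        omega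
      · obtain ⟨e, i0, hei, hi0⟩ : ∃ e i0, r - 1 = lam*e + i0 ∧ i0 < lam :=
          ⟨(r-1)/lam, (r-1)%lam, (Nat.div_add_mod _ _).symm, Nat.mod_lt _ hlam⟩
        refine ⟨i0 + 1, e, by omega, by omega, ?_, d, 0, ?_⟩
        · by_contra hcon
          push_neg at hcon
          have h5 : (M'+1)*(p+1)*lam ≤ e*lam := mul_le_mul_left hcon lam
          have h6 : lam*e = e*lam := Nat.mul_comm _ _
          omega
        · have h1 : e*lam = lam*e := Nat.mul_comm _ _
          have h2 : d*K = K*d := Nat.mul_comm _ _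
          omega
    have hEcongr : ∀ t : ℕ, eSum K m (i + (s + t)*lam) = eSum K m (k.val + t*lam) := by
      intro t
      refine eSum_congr K m _ _ c₁ c₂ ?_
      have h1 : (s+t)*lam = s*lam + t*lam := by ring
      omega
    set P := Submodule.span (ZMod 2) (S ∪ stdVec (m*K) '' A k) with hP
    have hPleft : Submodule.span (ZMod 2) S ≤ P := by
      rw [hP]; exact Submodule.span_mono Set.subset_union_left
    have hPright : ∀ x ∈ A k, stdVec (m*K) x ∈ P :=
      fun x hx => Submodule.subset_span (Set.mem_union_right _ ⟨x, hx, rfl⟩)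
    have hP1 : (∑ t ∈ Finset.range (p+1), eSum K m (i + (s+t)*lam)) ∈ P :=
      hPleft (hwin i s hi1 hi2 hsN)
    have hstd : ∀ a : ℕ, ((k.val + a : ℕ) : ZMod (m*K)) = k + ((a : ℕ) : ZMod (m*K)) := by
      intro a; rw [Nat.cast_add, hkc]
    have hP2 : ∀ j : ℕ, 1 ≤ j → j ≤ p → eSum K m (k.val + j*lam) ∈ P := by
      intro j hj1 hj2
      unfold eSum
      refine Submodule.sum_mem _ fun u hu => ?_
      have hu' := Finset.mem_range.mp hu
      have hx : ((k.val + j*lam + u*K : ℕ) : ZMod (m*K))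
          = k + ((j*lam + u*K : ℕ) : ZMod (m*K)) := by
        rw [show k.val + j*lam + u*K = k.val + (j*lam + u*K) by ring, hstd]
      rw [hx]
      refine hPright _ ?_
      simp only [hA]
      exact Set.mem_union_right _ ⟨j, u, hj1, hj2, by omega, rfl⟩
    have hP3 : ∀ u : ℕ, 1 ≤ u → u ≤ m - 1 → stdVec (m*K) ((k.val + u*K : ℕ)) ∈ P := by
      intro u h1 h2
      rw [hstd (u*K)]
      refine hPright _ ?_
      simp only [hA]
      exact Set.mem_union_left _ ⟨u, h1, h2, rfl⟩
    have E1 : eSum K m k.val = ∑ t ∈ Finset.range (m-1), stdVec (m*K) ((k.val + (t+1)*K : ℕ))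
        + stdVec (m*K) k := by
      rw [eSum_split K m k.val hm, hkc]
    have E2 : ∑ t ∈ Finset.range (p+1), eSum K m (i + (s+t)*lam)
        = ∑ t ∈ Finset.range p, eSum K m (k.val + (t+1)*lam) + eSum K m k.val := by
      rw [Finset.sum_range_succ' (fun t => eSum K m (i + (s+t)*lam)) p]
      congr 1
      · exact Finset.sum_congr rfl fun t _ => by
          rw [show i + (s+(t+1))*lam = i + (s+(t+1))*lam from rfl, hEcongr (t+1)]
      · rw [hEcongr 0]
        exact congrArg (eSum K m) (by ring)
    have hfinal : stdVec (m*K) k = (∑ t ∈ Finset.range (p+1), eSum K m (i + (s+t)*lam))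
        - (∑ t ∈ Finset.range p, eSum K m (k.val + (t+1)*lam))
        - (∑ t ∈ Finset.range (m-1), stdVec (m*K) ((k.val + (t+1)*K : ℕ))) := by
      rw [E2, E1]; abel
    rw [hfinal]
    exact sub_mem (sub_mem hP1 (Submodule.sum_mem _ fun t ht => hP2 (t+1) (by omega)
        (by have := Finset.mem_range.mp ht; omega)))
      (Submodule.sum_mem _ fun t ht => hP3 (t+1) (by omega)
        (by have := Finset.mem_range.mp ht; omega))
  have hcard_le : S.ncard ≤ K - D := by
    rw [hS_eq, Set.ncard_coe_finset]
    calc ((Finset.Icc 1 lam ×ˢ Finset.range (M'*(p+1)+1)).image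
          (fun ij : ℕ × ℕ => ∑ t ∈ Finset.range (p+1), eSum K m (ij.1 + (ij.2+t)*lam))).card
        ≤ ((Finset.Icc 1 lam) ×ˢ (Finset.range (M'*(p+1)+1))).card := Finset.card_image_le
      _ = lam * (M'*(p+1)+1) := by
          rw [Finset.card_product, Nat.card_Icc, Finset.card_range, Nat.add_sub_cancel]
      _ ≤ K - D := by
          have h1 : lam * (M'*(p+1)+1) + p*lam = (M'+1)*(p+1)*lam := by ring
          omega
  have hlower : ∀ C' : Set (ZMod (m*K) → ZMod 2),
      IsIndexCode (m*K) A C' → K - D ≤ C'.ncard := by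
    intro C' hC'
    obtain ⟨hfin, hspan⟩ := hC'
    have hzero : ∀ (k : ZMod (m*K)) (z : ZMod (m*K) → ZMod 2),
        z ∈ Submodule.span (ZMod 2) (stdVec (m*K) '' A k) → ∀ x, x ∉ A k → z x = 0 := by
      intro k z hz x hx
      have hle : Submodule.span (ZMod 2) (stdVec (m*K) '' A k)
          ≤ LinearMap.ker (LinearMap.proj (R := ZMod 2)
              (φ := fun _ : ZMod (m*K) => ZMod 2) x) := by
        rw [Submodule.span_le]
        rintro w ⟨jj, hjj, rfl⟩
        simp only [SetLike.mem_coe, LinearMap.mem_ker, LinearMap.proj_apply]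
        have hne : x ≠ jj := fun h => hx (h ▸ hjj)
        simp [stdVec, hne]
      have := hle hz
      simpa using this
    have hchoice : ∀ a : Fin (K - D), ∃ u, u ∈ Submodule.span (ZMod 2) C' ∧
        ∀ x : ZMod (m*K), x ∉ A ((a : ℕ) : ZMod (m*K)) →
          u x = stdVec (m*K) ((a : ℕ)) x := by
      intro a
      have h := hspan ((a : ℕ) : ZMod (m*K))
      rw [Submodule.span_union, Submodule.mem_sup] at h
      obtain ⟨y, hy, z, hz, hyz⟩ := h
      refine ⟨y, hy, fun x hx => ?_⟩
      have h0 := hzero _ _ hz x hx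
      have h1 := congrFun hyz x
      simp only [Pi.add_apply] at h1
      rw [← h1, h0, add_zero]
    choose u hu1 hu2 using hchoice
    have hnotA : ∀ a b : ℕ, a < K - D → b ≤ a →
        ((b : ℕ) : ZMod (m*K)) ∉ A ((a : ℕ) : ZMod (m*K)) := by
      intro a b ha hba hmem
      simp only [hA, Set.mem_union, Set.mem_setOf_eq] at hmem
      rcases hmem with ⟨i, hi1, hi2, hx⟩ | ⟨j, i, hj1, hj2, hi, hx⟩
      · have hcast : ((b : ℕ) : ZMod (m*K)) = ((a + i*K : ℕ) : ZMod (m*K)) := by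
          rw [hx]; push_cast; ring
        have hmod : b % (m*K) = (a + i*K) % (m*K) :=
          (ZMod.natCast_eq_natCast_iff _ _ _).mp hcast
        have h1 : (i+1)*K ≤ m*K := mul_le_mul_left (by omega) K
        have h2 : (i+1)*K = i*K + K := by ring
        have h3 : 1*K ≤ i*K := mul_le_mul_left hi1 K
        rw [one_mul] at h3
        rw [Nat.mod_eq_of_lt (by omega), Nat.mod_eq_of_lt (by omega)] at hmod
        omega
      · have hcast : ((b : ℕ) : ZMod (m*K)) = ((a + (j*lam + i*K) : ℕ) : ZMod (m*K)) := by
          rw [hx]; push_cast; ring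
        have hmod : b % (m*K) = (a + (j*lam + i*K)) % (m*K) :=
          (ZMod.natCast_eq_natCast_iff _ _ _).mp hcast
        have h1 : (i+1)*K ≤ m*K := mul_le_mul_left (by omega) K
        have h2 : (i+1)*K = i*K + K := by ring
        have h3 : 1*lam ≤ j*lam := mul_le_mul_left hj1 lam
        rw [one_mul] at h3
        have h4 : j*lam ≤ p*lam := mul_le_mul_left hj2 lam
        rw [Nat.mod_eq_of_lt (by omega), Nat.mod_eq_of_lt (by omega)] at hmod
        omega
    have hustd : ∀ (b : Fin (K-D)) (aa : ℕ), aa ≤ (b : ℕ) →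
        u b ((aa : ℕ) : ZMod (m*K)) = stdVec (m*K) (((b : ℕ) : ℕ)) ((aa : ℕ)) :=
      fun b aa h => hu2 b _ (hnotA (b : ℕ) aa b.isLt h)
    have hdiag : ∀ b : Fin (K-D), u b (((b : ℕ) : ℕ)) = 1 := by
      intro b
      rw [hustd b (b : ℕ) le_rfl]
      simp [stdVec]
    have habove : ∀ (b : Fin (K-D)) (aa : ℕ), aa < (b : ℕ) →
        u b ((aa : ℕ)) = 0 := by
      intro b aa h
      rw [hustd b aa (le_of_lt h)]
      have hne : ((aa : ℕ) : ZMod (m*K)) ≠ (((b : ℕ) : ℕ) : ZMod (m*K)) := by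
        intro hc
        have hblt := b.isLt
        have h1 := ZMod.val_cast_of_lt (show aa < m*K by omega)
        have h2 := ZMod.val_cast_of_lt (show (b : ℕ) < m*K by omega)
        rw [hc, h2] at h1
        omega
      simp [stdVec, hne]
    set W := Submodule.span (ZMod 2) C' with hW
    haveI : FiniteDimensional (ZMod 2) W := FiniteDimensional.span_of_finite _ hfin
    have hli : LinearIndependent (ZMod 2) (fun a : Fin (K-D) => (⟨u a, hu1 a⟩ : W)) := by
      rw [Fintype.linearIndependent_iff]
      intro g hg
      have hg' : ∑ i : Fin (K-D), g i • u i = 0 := by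
        have h := congrArg (Submodule.subtype W) hg
        rw [map_sum] at h
        simpa using h
      have key : ∀ aa : ℕ, ∀ a : Fin (K-D), (a : ℕ) = aa → g a = 0 := by
        intro aa
        induction aa using Nat.strong_induction_on with
        | _ aa ih =>
          intro a ha
          subst ha
          have hev := congrFun hg' (((a : ℕ) : ℕ) : ZMod (m*K))
          rw [Finset.sum_apply] at hev
          simp only [Pi.smul_apply, smul_eq_mul, Pi.zero_apply] at hev
          have hsum : ∑ i : Fin (K-D), g i * u i (((a : ℕ) : ℕ) : ZMod (m*K))
              = g a * u a (((a : ℕ) : ℕ) : ZMod (m*K)) := by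
            refine Finset.sum_eq_single_of_mem a (Finset.mem_univ a) fun b _ hb => ?_
            rcases lt_or_gt_of_ne (fun hc : (b : ℕ) = (a : ℕ) => hb (Fin.ext hc)) with hlt | hgt
            · rw [ih (b : ℕ) hlt b rfl, zero_mul]
            · rw [habove b (a : ℕ) hgt, mul_zero]
          rw [hsum, hdiag a, mul_one] at hev
          exact hev
      exact fun a => key (a : ℕ) a rfl
    have hcardle := hli.fintype_card_le_finrank
    rw [Fintype.card_fin] at hcardle
    haveI := hfin.fintype
    have hfr : Module.finrank (ZMod 2) W ≤ C'.toFinset.card := by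
      rw [hW]; exact finrank_span_le_card C'
    rw [Set.ncard_eq_toFinset_card' C']
    omega
  have hIsCode : IsIndexCode (m*K) A S := ⟨hSfin, hspanS⟩
  exact ⟨⟨hIsCode, le_antisymm hcard_le (hlower S hIsCode)⟩, hlower⟩
end

section
/- Let K, D, λ, m be positive integers with λ dividing D, D dividing K + λ, and n := (K + λ)/D > 2; set p = D − λ. Consider the index coding problem with mK messages where, writing each k ∈ ZMod (mK) with representative whose residue modulo K has representative k̄ ∈ {1, …, K}: if k̄ ≤ K − 2D + λ then A'_k = {k + iK : 1 ≤ i ≤ m−1} ∪ {k + D + iK : 0 ≤ i ≤ m−1}, and if K − 2D + λ < k̄ ≤ K then A'_k = {k + iK : 1 ≤ i ≤ m−1} ∪ {k + jλ + iK : 1 ≤ j ≤ D/λ, 0 ≤ i ≤ m−1}. Then the set C^(m) = { e'_{i+(j−1)D} + e'_{i+jD} : 1 ≤ i ≤ D, 1 ≤ j ≤ n−2 } ∪ { e'_{K−2D+1+λ+i'} + e'_{K−D+1+i'} + e'_{K−λ+1+(i' mod λ)} : 0 ≤ i' ≤ p−1 }, where e'_l = Σ_{t=0}^{m−1} e_{l+tK}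 ∈ V_{mK}, is a valid scalar linear index code of length K − D for this problem, and moreover every valid scalar linear index code for this problem has length at least K − D. -/
/-- The representative in `{1, …, K}` of the residue modulo `K` of `k ∈ ZMod n`. -/
def resIdx (n K : ℕ) (k : ZMod n) : ℕ := if k.val % K = 0 then K else k.val % K

/-- Lifted antidote pattern of Class (iv): for `k` with residue index
`k̄ ≤ K - 2D + λ` the antidotes are `{k+iK : 1 ≤ i ≤ m-1} ∪ {k+D+iK : 0 ≤ i ≤ m-1}`;
otherwise they are `{k+iK : 1 ≤ i ≤ m-1} ∪ {k+jλ+iK : 1 ≤ j ≤ D/λ, 0 ≤ i ≤ m-1}`. -/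
def classivA (K D lam m : ℕ) (k : ZMod (m * K)) : Set (ZMod (m * K)) :=
  if resIdx (m * K) K k ≤ K - 2 * D + lam then
    {x | ∃ i : ℕ, 1 ≤ i ∧ i ≤ m - 1 ∧ x = k + (i * K : ℕ)} ∪
    {x | ∃ i : ℕ, i ≤ m - 1 ∧ x = k + (D + i * K : ℕ)}
  else
    {x | ∃ i : ℕ, 1 ≤ i ∧ i ≤ m - 1 ∧ x = k + (i * K : ℕ)} ∪
    {x | ∃ j i : ℕ, 1 ≤ j ∧ j ≤ D / lam ∧ i ≤ m - 1 ∧ x = k + (j * lam + i * K : ℕ)}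

/-- The lifted code of Class (iv) (Corollary 7), with `n = (K + λ)/D` and `p = D - λ`. -/
def codeClassiv (K D lam m : ℕ) : Set (ZMod (m * K) → ZMod 2) :=
  {v | ∃ i j : ℕ, 1 ≤ i ∧ i ≤ D ∧ 1 ≤ j ∧ j ≤ (K + lam) / D - 2 ∧
    v = eSum K m (i + (j - 1) * D) + eSum K m (i + j * D)} ∪
  {v | ∃ i' : ℕ, i' < D - lam ∧
    v = eSum K m (K - 2 * D + 1 + lam + i') + eSum K m (K - D + 1 + i') +
      eSum K m (K - lam + 1 + (i' % lam))}

section Infra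

variable {K m : ℕ}

private lemma addSelf {M : Type*} [AddCommMonoid M] [Module (ZMod 2) M] (v : M) : v + v = 0 := by
  have h : (2 : ZMod 2) • v = v + v := two_smul _ v
  rw [show (2 : ZMod 2) = 0 by decide, zero_smul] at h
  exact h.symm

private lemma mem_cancel {M : Type*} [AddCommMonoid M] [Module (ZMod 2) M]
    {R : Submodule (ZMod 2) M} {v w : M} (h : v + w ∈ R) (hw : w ∈ R) : v ∈ R := by
  have h2 := R.add_mem h hw
  rwa [add_assoc, addSelf, add_zero] at h2

private lemma cast_key (hK : 0 < K) (hm : 0 < m) (x : ZMod (m * K)) (y : ℕ) :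
    x = (y : ZMod (m * K)) ↔ x.val ≡ y [MOD m * K] := by
  constructor
  · intro h
    rw [h, ZMod.val_natCast]
    exact (Nat.mod_modEq y (m * K))
  · intro h
    haveI : NeZero (m * K) := ⟨(Nat.mul_pos hm hK).ne'⟩
    have h2 := (ZMod.natCast_eq_natCast_iff _ _ _).mpr h
    rwa [ZMod.natCast_val, ZMod.cast_id] at h2

private lemma eSum_apply (hK : 0 < K) (hm : 0 < m) (l : ℕ) (x : ZMod (m * K)) :
    eSum K m l x = if x.val % K = l % K then 1 else 0 := by
  rw [eSum, Finset.sum_apply]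
  simp only [stdVec]
  by_cases hc : x.val % K = l % K
  · rw [if_pos hc]
    set u := x.val with hu
    set t₀ := (u / K + (m - l / K % m)) % m with ht₀def
    have ht₀m : t₀ < m := Nat.mod_lt _ hm
    have inner : l / K + t₀ ≡ u / K [MOD m] := by
      have h1 : (u / K + (m - l / K % m)) % m ≡ u / K + (m - l / K % m) [MOD m] :=
        Nat.mod_modEq _ m
      have hd := Nat.div_add_mod (l / K) m
      have hlt : l / K % m < m := Nat.mod_lt _ hm
      have h2 : l / K + (u / K + (m - l / K % m)) = u / K + m * (l / K / m) + m := by omega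
      calc l / K + t₀ ≡ l / K + (u / K + (m - l / K % m)) [MOD m] := h1.add_left _
        _ = u / K + m * (l / K / m) + m := h2
        _ ≡ u / K [MOD m] := by
            show (u / K + m * (l / K / m) + m) % m = u / K % m
            rw [Nat.add_mod_right, Nat.add_mul_mod_self_left]
    have h3 : K * (l / K + t₀) ≡ K * (u / K) [MOD m * K] := by
      rw [mul_comm m K]; exact inner.mul_left' K
    have hmain : x = ((l + t₀ * K : ℕ) : ZMod (m * K)) := by
      rw [cast_key hK hm]
      have hexp : K * (l / K + t₀) = K * (l / K) + K * t₀ := Nat.mul_add _ _ _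
      have hld := Nat.div_add_mod l K
      have hud := Nat.div_add_mod u K
      have h4 : l + t₀ * K = l % K + K * (l / K + t₀) := by
        have : t₀ * K = K * t₀ := Nat.mul_comm _ _
        omega
      have h5 : u = l % K + K * (u / K) := by omega
      have h6 : l + t₀ * K ≡ u [MOD m * K] := by
        rw [h4, h5]; exact h3.add_left _
      exact h6.symm
    rw [Finset.sum_eq_single_of_mem t₀ (Finset.mem_range.mpr ht₀m)]
    · rw [if_pos hmain]
    · intro t ht htne
      rw [if_neg]
      intro hcon
      have h7 : u ≡ l + t * K [MOD m * K] := (cast_key hK hm x _).mp hcon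
      have h8 : u ≡ l + t₀ * K [MOD m * K] := (cast_key hK hm x _).mp hmain
      have h9 : l + t * K ≡ l + t₀ * K [MOD m * K] := h7.symm.trans h8
      have h10 : t * K ≡ t₀ * K [MOD m * K] := h9.add_left_cancel' l
      have h11 : t ≡ t₀ [MOD m] := Nat.ModEq.mul_right_cancel' hK.ne' h10
      have h12 : t % m = t₀ % m := h11
      rw [Nat.mod_eq_of_lt (Finset.mem_range.mp ht), Nat.mod_eq_of_lt ht₀m] at h12
      exact htne h12
  · rw [if_neg hc]
    apply Finset.sum_eq_zero
    intro t ht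
    rw [if_neg]
    intro hcon
    have h7 : x.val ≡ l + t * K [MOD m * K] := (cast_key hK hm x _).mp hcon
    have h8 : x.val ≡ l + t * K [MOD K] := h7.of_mul_left m
    have h9 : (l + t * K) % K = l % K := Nat.add_mul_mod_self_right l t K
    exact hc (h8.trans h9)

private lemma eSum_congr_s14 (hK : 0 < K) (hm : 0 < m) {l l' : ℕ} (h : l ≡ l' [MOD K]) :
    eSum K m l = eSum K m l' := by
  funext x
  rw [eSum_apply hK hm, eSum_apply hK hm]
  have h' : l % K = l' % K := h
  rw [h']

private lemma eSum_add_K (hK : 0 < K) (hm : 0 < m) (l : ℕ) :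
    eSum K m (l + K) = eSum K m l :=
  eSum_congr_s14 hK hm (Nat.add_mod_right l K)

private lemma eSum_eval (hK : 0 < K) (hm : 0 < m) (l y : ℕ) :
    eSum K m l ((y : ℕ) : ZMod (m * K)) = if y % K = l % K then 1 else 0 := by
  rw [eSum_apply hK hm]
  rw [ZMod.val_natCast, Nat.mod_mod_of_dvd y (dvd_mul_left K m)]

private lemma win {K a b : ℕ} (ha1 : 1 ≤ a) (haK : a ≤ K) (hb1 : 1 ≤ b) (hbK : b ≤ K)
    (h : a % K = b % K) : a = b := by
  rcases le_total a b with hab | hab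
  · have hdvd := (Nat.modEq_iff_dvd' hab).mp h
    rcases Nat.eq_zero_or_pos (b - a) with h0 | h0
    · omega
    · have := Nat.le_of_dvd h0 hdvd; omega
  · have hdvd := (Nat.modEq_iff_dvd' hab).mp (Eq.symm h)
    rcases Nat.eq_zero_or_pos (a - b) with h0 | h0
    · omega
    · have := Nat.le_of_dvd h0 hdvd; omega

end Infra

private lemma eq_add_of_add_eq' {M : Type*} [AddCommMonoid M] [Module (ZMod 2) M]
    {a b c : M} (h : a + b = c) : a = c + b := by
  rw [← h, add_assoc, addSelf, add_zero]


set_option maxHeartbeats 1000000 in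
private lemma decode (K D lam m q p L : ℕ) (hm : 0 < m) (hlam : 0 < lam)
    (hq : 1 ≤ q) (hKe : K = D * q + 2 * p + lam) (hDe : D = p + lam)
    (hLe : D = lam * L) (k : ZMod (m * K)) :
    stdVec (m * K) k ∈ Submodule.span (ZMod 2)
      (codeClassiv K D lam m ∪ stdVec (m * K) '' classivA K D lam m k) := by
  have hD : 0 < D := by omega
  have hDq : D ≤ D * q := Nat.le_mul_of_pos_right D hq
  have hK : 0 < K := by omega
  haveI : NeZero (m * K) := ⟨(Nat.mul_pos hm hK).ne'⟩
  have hL1 : 1 ≤ L := by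
    rcases Nat.eq_zero_or_pos L with h | h
    · rw [h, Nat.mul_zero] at hLe; omega
    · exact h
  have hLlam : lam * L = p + lam := by omega
  have hDiv : D / lam = L := by rw [hLe]; exact Nat.mul_div_cancel_left L hlam
  have hkc : ((k.val : ℕ) : ZMod (m * K)) = k := by
    rw [ZMod.natCast_val, ZMod.cast_id]
  set R := Submodule.span (ZMod 2)
      (codeClassiv K D lam m ∪ stdVec (m * K) '' classivA K D lam m k) with hRdef
  set r := resIdx (m * K) K k with hrdef
  have hr1 : 1 ≤ r := by
    rw [hrdef, resIdx]; split
    · omega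
    · omega
  have hrK : r ≤ K := by
    rw [hrdef, resIdx]; split
    · exact le_refl K
    · exact le_of_lt (Nat.mod_lt _ hK)
  have hkr : k.val ≡ r [MOD K] := by
    show k.val % K = r % K
    rw [hrdef, resIdx]; split
    · next h => rw [h, Nat.mod_self]
    · exact (Nat.mod_eq_of_lt (Nat.mod_lt _ hK)).symm
  have hbnd : K - 2 * D + lam = D * q := by omega
  have hresr : resIdx (m * K) K k = r := hrdef.symm
  have hq2 : (K + lam) / D = q + 2 := by
    have h1 : D * (q + 2) = D * q + 2 * D := by ring
    rw [show K + lam = D * (q + 2) by omega]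
    exact Nat.mul_div_cancel_left _ hD
  -- antidote membership lemmas
  have hanti_same : ∀ t : ℕ, 1 ≤ t → t ≤ m - 1 →
      stdVec (m * K) ((k.val + t * K : ℕ)) ∈ R := by
    intro t h1 h2
    apply Submodule.subset_span
    right
    refine ⟨k + ((t * K : ℕ) : ZMod (m * K)), ?_, ?_⟩
    · rw [classivA]; split
      · exact Or.inl ⟨t, h1, h2, rfl⟩
      · exact Or.inl ⟨t, h1, h2, rfl⟩
    · refine congrArg (stdVec (m * K)) ?_
      show k + ((t * K : ℕ) : ZMod (m * K)) = ((k.val + t * K : ℕ) : ZMod (m * K))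
      push_cast [hkc]; ring
  have hanti1 : r ≤ D * q → eSum K m (k.val + D) ∈ R := by
    intro hcls
    refine Submodule.sum_mem _ fun t ht => Submodule.subset_span (Or.inr ?_)
    refine ⟨k + ((D + t * K : ℕ) : ZMod (m * K)), ?_, ?_⟩
    · rw [classivA, if_pos (by rw [hresr, hbnd]; exact hcls)]
      exact Or.inr ⟨t, by have := Finset.mem_range.mp ht; omega, rfl⟩
    · refine congrArg (stdVec (m * K)) ?_
      show k + ((D + t * K : ℕ) : ZMod (m * K)) = ((k.val + D + t * K : ℕ) : ZMod (m * K))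
      push_cast [hkc]; ring
  have hanti2 : ¬ r ≤ D * q → ∀ j : ℕ, 1 ≤ j → j ≤ L →
      eSum K m (k.val + j * lam) ∈ R := by
    intro hcls j hj1 hjL
    refine Submodule.sum_mem _ fun t ht => Submodule.subset_span (Or.inr ?_)
    refine ⟨k + ((j * lam + t * K : ℕ) : ZMod (m * K)), ?_, ?_⟩
    · rw [classivA, if_neg (by rw [hresr, hbnd]; exact hcls)]
      exact Or.inr ⟨j, t, hj1, by rw [hDiv]; exact hjL,
        by have := Finset.mem_range.mp ht; omega, rfl⟩
    · refine congrArg (stdVec (m * K)) ?_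
      show k + ((j * lam + t * K : ℕ) : ZMod (m * K)) = ((k.val + j * lam + t * K : ℕ) : ZMod (m * K))
      push_cast [hkc]; ring
  -- codeword membership
  have hcode1 : ∀ i j : ℕ, 1 ≤ i → i ≤ D → 1 ≤ j → j ≤ q →
      eSum K m (i + (j - 1) * D) + eSum K m (i + j * D) ∈ R := by
    intro i j h1 h2 h3 h4
    exact Submodule.subset_span (Or.inl (Or.inl ⟨i, j, h1, h2, h3, by omega, rfl⟩))
  have hcode2 : ∀ i' : ℕ, i' < p →
      eSum K m (K - 2 * D + 1 + lam + i') + eSum K m (K - D + 1 + i') +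
        eSum K m (K - lam + 1 + (i' % lam)) ∈ R := by
    intro i' h
    exact Submodule.subset_span (Or.inl (Or.inr ⟨i', by omega, rfl⟩))
  -- telescoping
  have htele : ∀ i : ℕ, 1 ≤ i → i ≤ D → ∀ j : ℕ, j ≤ q →
      eSum K m i + eSum K m (i + j * D) ∈ R := by
    intro i h1 h2 j
    induction j with
    | zero =>
      intro _
      rw [show i + 0 * D = i by omega, addSelf]
      exact zero_mem R
    | succ j ih =>
      intro hj
      have h5 := hcode1 i (j + 1) h1 h2 (by omega) hj
      rw [show j + 1 - 1 = j by omega] at h5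
      have h6 := R.add_mem (ih (by omega)) h5
      have hiden : eSum K m i + eSum K m (i + (j + 1) * D)
          = (eSum K m i + eSum K m (i + j * D)) +
            (eSum K m (i + j * D) + eSum K m (i + (j + 1) * D)) := by
        funext x
        simp only [Pi.add_apply]
        generalize eSum K m i x = a
        generalize eSum K m (i + j * D) x = b
        generalize eSum K m (i + (j + 1) * D) x = c
        revert a b c; decide
      rw [hiden]
      exact h6
  -- reduce goal to eSum K m r ∈ R
  have hEk : eSum K m k.val = eSum K m r := eSum_congr_s14 hK hm hkr
  suffices hsuf : eSum K m r ∈ R by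
    have h0 : stdVec (m * K) ((k.val + 0 * K : ℕ)) = stdVec (m * K) k := by
      simp [hkc]
    have hsplit : stdVec (m * K) k +
        ∑ t ∈ (Finset.range m).erase 0, stdVec (m * K) ((k.val + t * K : ℕ))
        = eSum K m k.val := by
      rw [← h0, eSum]
      exact Finset.add_sum_erase _ (fun t => stdVec (m * K) ((k.val + t * K : ℕ)))
        (Finset.mem_range.mpr hm)
    have hsum_mem : (∑ t ∈ (Finset.range m).erase 0,
        stdVec (m * K) ((k.val + t * K : ℕ))) ∈ R := by
      refine Submodule.sum_mem _ fun t ht => ?_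
      rw [Finset.mem_erase, Finset.mem_range] at ht
      exact hanti_same t (by omega) (by omega)
    have hgoal : stdVec (m * K) k = eSum K m k.val +
        ∑ t ∈ (Finset.range m).erase 0, stdVec (m * K) ((k.val + t * K : ℕ)) :=
      eq_add_of_add_eq' hsplit
    rw [hgoal, hEk]
    exact R.add_mem hsuf hsum_mem
  by_cases hcls : r ≤ D * q
  · -- class 1
    obtain ⟨i, j0, hi1, hiD, hij, hj0⟩ :
        ∃ i j0, 1 ≤ i ∧ i ≤ D ∧ r = i + j0 * D ∧ j0 + 1 ≤ q := by
      refine ⟨(r - 1) % D + 1, (r - 1) / D, by omega, ?_, ?_, ?_⟩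
      · have := Nat.mod_lt (r - 1) hD; omega
      · have h1 := Nat.div_add_mod (r - 1) D
        have h2 : (r - 1) / D * D = D * ((r - 1) / D) := Nat.mul_comm _ _
        omega
      · have h3 : (r - 1) / D < q := by
          rw [Nat.div_lt_iff_lt_mul hD]
          have : q * D = D * q := Nat.mul_comm _ _
          omega
        omega
    have hc := hcode1 i (j0 + 1) hi1 hiD (by omega) hj0
    rw [show j0 + 1 - 1 = j0 by omega] at hc
    have ha := hanti1 hcls
    have he : eSum K m (k.val + D) = eSum K m (i + (j0 + 1) * D) := by
      refine eSum_congr_s14 hK hm ?_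
      have h4 : (j0 + 1) * D = j0 * D + D := by ring
      calc k.val + D ≡ r + D [MOD K] := hkr.add_right D
        _ = i + (j0 + 1) * D := by omega
    rw [he] at ha
    have hiden : eSum K m r =
        (eSum K m (i + j0 * D) + eSum K m (i + (j0 + 1) * D)) + eSum K m (i + (j0 + 1) * D) := by
      rw [show r = i + j0 * D from hij]
      funext x
      simp only [Pi.add_apply]
      generalize eSum K m (i + j0 * D) x = a
      generalize eSum K m (i + (j0 + 1) * D) x = b
      revert a b; decide
    rw [hiden]
    exact R.add_mem hc ha
  · -- class 2
    have hanti := hanti2 hcls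
    set s := r - (D * q + 1) with hsdef
    have hrs : r = D * q + 1 + s := by omega
    have hsbound : s < 2 * p + lam := by omega
    by_cases hA : s < p
    · -- region R1
      have hppos : 0 < p := by omega
      obtain ⟨L2, rfl⟩ : ∃ L2, L = L2 + 2 := by
        have h1 : lam * 1 < lam * L := by omega
        have h2 : 1 < L := lt_of_mul_lt_mul_left h1 (Nat.zero_le lam)
        exact ⟨L - 2, by omega⟩
      have hmul2 : lam * (L2 + 2) = lam * L2 + 2 * lam := by ring
      have hpu : p = lam * L2 + lam := by omega
      have hm1 : (L2 + 1) * lam = lam * L2 + lam := by ring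
      have hm2 : (L2 + 2) * lam = lam * L2 + 2 * lam := by ring
      have ha1 := hanti (L2 + 1) (by omega) (by omega)
      have ha2 := hanti (L2 + 2) (by omega) (by omega)
      have he1 : eSum K m (k.val + (L2 + 1) * lam) = eSum K m (r + (L2 + 1) * lam) :=
        eSum_congr_s14 hK hm (hkr.add_right _)
      have he2 : eSum K m (k.val + (L2 + 2) * lam) = eSum K m (r + (L2 + 2) * lam) :=
        eSum_congr_s14 hK hm (hkr.add_right _)
      rw [he1] at ha1
      rw [he2] at ha2
      by_cases hA1 : lam * L2 ≤ s
      · -- R1a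
        have hv : s - lam * L2 < lam := by omega
        have smod : s % lam = s - lam * L2 := by
          conv_lhs => rw [show s = lam * L2 + (s - lam * L2) from by omega]
          rw [Nat.mul_add_mod]
          exact Nat.mod_eq_of_lt hv
        have hw := hcode2 s hA
        rw [smod,
          show K - 2 * D + 1 + lam + s = r by omega,
          show K - D + 1 + s = r + (L2 + 1) * lam by omega,
          show K - lam + 1 + (s - lam * L2) = r + (L2 + 2) * lam by omega] at hw
        have hiden : eSum K m r =
            (eSum K m r + eSum K m (r + (L2 + 1) * lam) + eSum K m (r + (L2 + 2) * lam)) +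
              eSum K m (r + (L2 + 1) * lam) + eSum K m (r + (L2 + 2) * lam) := by
          funext x
          simp only [Pi.add_apply]
          generalize eSum K m r x = a
          generalize eSum K m (r + (L2 + 1) * lam) x = b
          generalize eSum K m (r + (L2 + 2) * lam) x = c
          revert a b c; decide
        rw [hiden]
        exact R.add_mem (R.add_mem hw ha1) ha2
      · -- R1b
        have ha0 := hanti 1 (le_refl 1) (by omega)
        have he0 : eSum K m (k.val + 1 * lam) = eSum K m (r + 1 * lam) :=
          eSum_congr_s14 hK hm (hkr.add_right _)
        rw [he0] at ha0
        have hw := hcode2 s (by omega)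
        have hw' := hcode2 (s + lam) (by omega)
        rw [show K - 2 * D + 1 + lam + s = r by omega,
          show K - D + 1 + s = r + (L2 + 1) * lam by omega] at hw
        rw [Nat.add_mod_right,
          show K - 2 * D + 1 + lam + (s + lam) = r + 1 * lam by omega,
          show K - D + 1 + (s + lam) = r + (L2 + 2) * lam by omega] at hw'
        have hiden : eSum K m r =
            (eSum K m r + eSum K m (r + (L2 + 1) * lam) + eSum K m (K - lam + 1 + s % lam)) +
            (eSum K m (r + 1 * lam) + eSum K m (r + (L2 + 2) * lam) +
              eSum K m (K - lam + 1 + s % lam)) +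
            eSum K m (r + 1 * lam) + eSum K m (r + (L2 + 1) * lam) +
            eSum K m (r + (L2 + 2) * lam) := by
          funext x
          simp only [Pi.add_apply]
          generalize eSum K m r x = a
          generalize eSum K m (r + 1 * lam) x = b
          generalize eSum K m (r + (L2 + 1) * lam) x = c
          generalize eSum K m (r + (L2 + 2) * lam) x = d
          generalize eSum K m (K - lam + 1 + s % lam) x = e
          revert a b c d e; decide
        rw [hiden]
        exact R.add_mem (R.add_mem (R.add_mem (R.add_mem hw hw') ha0) ha1) ha2
    · by_cases hB : s < 2 * p
      · -- region R2
        have hppos : 0 < p := by omega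
        obtain ⟨L2, rfl⟩ : ∃ L2, L = L2 + 2 := by
          have h1 : lam * 1 < lam * L := by omega
          have h2 : 1 < L := lt_of_mul_lt_mul_left h1 (Nat.zero_le lam)
          exact ⟨L - 2, by omega⟩
        have hmul2 : lam * (L2 + 2) = lam * L2 + 2 * lam := by ring
        have hpu : p = lam * L2 + lam := by omega
        set i' := s - p with hi'def
        have hi'p : i' < p := by omega
        have hri' : r = D * q + p + 1 + i' := by omega
        obtain ⟨w, v, hv, hwv⟩ : ∃ w v, v < lam ∧ i' = lam * w + v :=
          ⟨i' / lam, i' % lam, Nat.mod_lt _ hlam, (Nat.div_add_mod i' lam).symm⟩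
        have hmodv : i' % lam = v := by
          rw [hwv, Nat.mul_add_mod]; exact Nat.mod_eq_of_lt hv
        have hwle : w ≤ L2 := by
          by_contra hcon
          have h1 : L2 + 1 ≤ w := by omega
          have h2 : lam * (L2 + 1) ≤ lam * w := Nat.mul_le_mul_left lam h1
          have h3 : lam * (L2 + 1) = lam * L2 + lam := by ring
          omega
        obtain ⟨j2, hj2, hj21⟩ : ∃ j2, w + j2 = L2 + 1 ∧ 1 ≤ j2 :=
          ⟨L2 + 1 - w, by omega, by omega⟩
        have hjmul : j2 * lam = lam * j2 := Nat.mul_comm _ _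
        have hjm : lam * w + lam * j2 = lam * L2 + lam := by
          rw [← Nat.mul_add, hj2, Nat.mul_add, Nat.mul_one]
        -- codeword
        have hw := hcode2 i' hi'p
        rw [hmodv,
          show K - 2 * D + 1 + lam + i' = D * q + 1 + i' by omega,
          show K - D + 1 + i' = r by omega] at hw
        -- telescope
        have ht := htele (1 + i') (by omega) (by omega) q (le_refl q)
        rw [show 1 + i' + q * D = D * q + 1 + i' by
          have : q * D = D * q := Nat.mul_comm _ _; omega] at ht
        -- antidotes
        have ha1 := hanti j2 hj21 (by omega)
        have he1 : eSum K m (k.val + j2 * lam) = eSum K m (K - lam + 1 + v) := by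
          refine (eSum_congr_s14 hK hm (hkr.add_right _)).trans ?_
          exact congrArg (eSum K m) (by omega)
        rw [he1] at ha1
        have ha2 := hanti (L2 + 2) (by omega) (by omega)
        have hm2 : (L2 + 2) * lam = lam * L2 + 2 * lam := by ring
        have he2 : eSum K m (k.val + (L2 + 2) * lam) = eSum K m (1 + i') := by
          refine (eSum_congr_s14 hK hm (hkr.add_right _)).trans ?_
          rw [show r + (L2 + 2) * lam = 1 + i' + K by omega]
          exact eSum_add_K hK hm _
        rw [he2] at ha2
        have hiden : eSum K m r =
            (eSum K m (D * q + 1 + i') + eSum K m r + eSum K m (K - lam + 1 + v)) +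
            (eSum K m (1 + i') + eSum K m (D * q + 1 + i')) +
            eSum K m (K - lam + 1 + v) + eSum K m (1 + i') := by
          funext x
          simp only [Pi.add_apply]
          generalize eSum K m r x = a
          generalize eSum K m (D * q + 1 + i') x = b
          generalize eSum K m (K - lam + 1 + v) x = c
          generalize eSum K m (1 + i') x = d
          revert a b c d; decide
        rw [hiden]
        exact R.add_mem (R.add_mem (R.add_mem hw ht) ha1) ha2
      · -- region R3
        set u0 := s - 2 * p with hu0def
        have hu0 : u0 < lam := by omega
        have hru : r = D * q + 2 * p + 1 + u0 := by omega
        by_cases hp0 : p = 0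
        · -- p = 0
          have ht := htele (1 + u0) (by omega) (by omega) q (le_refl q)
          rw [show 1 + u0 + q * D = r by
            have : q * D = D * q := Nat.mul_comm _ _; omega] at ht
          have ha1 := hanti 1 (le_refl 1) (by omega)
          have he1 : eSum K m (k.val + 1 * lam) = eSum K m (1 + u0) := by
            refine (eSum_congr_s14 hK hm (hkr.add_right _)).trans ?_
            rw [show r + 1 * lam = 1 + u0 + K by omega]
            exact eSum_add_K hK hm _
          rw [he1] at ha1
          have hiden : eSum K m r =
              (eSum K m (1 + u0) + eSum K m r) + eSum K m (1 + u0) := by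
            funext x
            simp only [Pi.add_apply]
            generalize eSum K m r x = a
            generalize eSum K m (1 + u0) x = b
            revert a b; decide
          rw [hiden]
          exact R.add_mem ht ha1
        · -- p > 0
          have hppos : 0 < p := by omega
          obtain ⟨L2, rfl⟩ : ∃ L2, L = L2 + 2 := by
            have h1 : lam * 1 < lam * L := by omega
            have h2 : 1 < L := lt_of_mul_lt_mul_left h1 (Nat.zero_le lam)
            exact ⟨L - 2, by omega⟩
          have hmul2 : lam * (L2 + 2) = lam * L2 + 2 * lam := by ring
          have hpu : p = lam * L2 + lam := by omega
          have hw := hcode2 u0 (by omega)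
          rw [Nat.mod_eq_of_lt hu0,
            show K - 2 * D + 1 + lam + u0 = D * q + 1 + u0 by omega,
            show K - D + 1 + u0 = D * q + p + 1 + u0 by omega,
            show K - lam + 1 + u0 = r by omega] at hw
          have ht1 := htele (1 + u0) (by omega) (by omega) q (le_refl q)
          rw [show 1 + u0 + q * D = D * q + 1 + u0 by
            have : q * D = D * q := Nat.mul_comm _ _; omega] at ht1
          have ht2 := htele (p + 1 + u0) (by omega) (by omega) q (le_refl q)
          rw [show p + 1 + u0 + q * D = D * q + p + 1 + u0 by
            have : q * D = D * q := Nat.mul_comm _ _; omega] at ht2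
          have ha1 := hanti 1 (le_refl 1) (by omega)
          have he1 : eSum K m (k.val + 1 * lam) = eSum K m (1 + u0) := by
            refine (eSum_congr_s14 hK hm (hkr.add_right _)).trans ?_
            rw [show r + 1 * lam = 1 + u0 + K by omega]
            exact eSum_add_K hK hm _
          rw [he1] at ha1
          have hm2 : (L2 + 2) * lam = lam * L2 + 2 * lam := by ring
          have ha2 := hanti (L2 + 2) (by omega) (by omega)
          have he2 : eSum K m (k.val + (L2 + 2) * lam) = eSum K m (p + 1 + u0) := by
            refine (eSum_congr_s14 hK hm (hkr.add_right _)).trans ?_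
            rw [show r + (L2 + 2) * lam = p + 1 + u0 + K by omega]
            exact eSum_add_K hK hm _
          rw [he2] at ha2
          have hiden : eSum K m r =
              (eSum K m (D * q + 1 + u0) + eSum K m (D * q + p + 1 + u0) + eSum K m r) +
              (eSum K m (1 + u0) + eSum K m (D * q + 1 + u0)) +
              (eSum K m (p + 1 + u0) + eSum K m (D * q + p + 1 + u0)) +
              eSum K m (1 + u0) + eSum K m (p + 1 + u0) := by
            funext x
            simp only [Pi.add_apply]
            generalize eSum K m r x = a
            generalize eSum K m (D * q + 1 + u0) x = b
            generalize eSum K m (D * q + p + 1 + u0) x = c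
            generalize eSum K m (1 + u0) x = d
            generalize eSum K m (p + 1 + u0) x = e
            revert a b c d e; decide
          rw [hiden]
          exact R.add_mem (R.add_mem (R.add_mem (R.add_mem hw ht1) ht2) ha1) ha2

set_option maxHeartbeats 1000000 in
private lemma count (K D lam m q p L : ℕ) (hm : 0 < m) (hlam : 0 < lam)
    (hq : 1 ≤ q) (hKe : K = D * q + 2 * p + lam) (hDe : D = p + lam) (hLe : D = lam * L) :
    (codeClassiv K D lam m).ncard = K - D ∧ (codeClassiv K D lam m).Finite := by
  classical
  have hD : 0 < D := by omega
  have hDq : D ≤ D * q := Nat.le_mul_of_pos_right D hq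
  have hK : 0 < K := by omega
  have hq2 : (K + lam) / D = q + 2 := by
    have h1 : D * (q + 2) = D * q + 2 * D := by ring
    rw [show K + lam = D * (q + 2) by omega]
    exact Nat.mul_div_cancel_left _ hD
  set g : ℕ → (ZMod (m * K) → ZMod 2) :=
    fun x => eSum K m (x + 1) + eSum K m (x + 1 + D) with hgdef
  set h : ℕ → (ZMod (m * K) → ZMod 2) :=
    fun i' => eSum K m (K - 2 * D + 1 + lam + i') + eSum K m (K - D + 1 + i') +
      eSum K m (K - lam + 1 + (i' % lam)) with hhdef
  have hset : codeClassiv K D lam m =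
      ↑(Finset.image g (Finset.range (D * q)) ∪ Finset.image h (Finset.range p)) := by
    ext v
    simp only [Finset.coe_union, Finset.coe_image, Finset.coe_range, Set.mem_union,
      Set.mem_image, Set.mem_Iio, codeClassiv, Set.mem_setOf_eq]
    constructor
    · rintro (⟨i, j, h1, h2, h3, h4, rfl⟩ | ⟨i', h5, rfl⟩)
      · left
        obtain ⟨j1, rfl⟩ : ∃ j1, j = j1 + 1 := ⟨j - 1, by omega⟩
        refine ⟨i + j1 * D - 1, ?_, ?_⟩
        · have h6 : (j1 + 1) * D = j1 * D + D := by ring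
          have h7 : j1 * D + D ≤ q * D := by
            have := Nat.mul_le_mul_right D (show j1 + 1 ≤ q by omega)
            omega
          have h8 : q * D = D * q := Nat.mul_comm _ _
          omega
        · simp only [hgdef, Nat.add_sub_cancel]
          have h6 : (j1 + 1) * D = j1 * D + D := by ring
          rw [show i + j1 * D - 1 + 1 = i + j1 * D from by omega,
            show i + j1 * D + D = i + (j1 + 1) * D from by omega]
      · right
        exact ⟨i', by omega, rfl⟩
    · rintro (⟨x, hx, rfl⟩ | ⟨i', hi', rfl⟩)
      · left
        refine ⟨x % D + 1, x / D + 1, Nat.le_add_left 1 _, ?_, Nat.le_add_left 1 _, ?_, ?_⟩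
        · have := Nat.mod_lt x hD; omega
        · have h3 : x / D < q := by
            rw [Nat.div_lt_iff_lt_mul hD]
            have : q * D = D * q := Nat.mul_comm _ _
            omega
          omega
        · simp only [hgdef, Nat.add_sub_cancel]
          have hd := Nat.div_add_mod x D
          have hcm : D * (x / D) = x / D * D := Nat.mul_comm _ _
          have h6 : (x / D + 1) * D = x / D * D + D := by ring
          rw [show x % D + 1 + x / D * D = x + 1 from by omega,
            show x % D + 1 + (x / D + 1) * D = x + 1 + D from by omega]
      · right
        exact ⟨i', by omega, rfl⟩
  -- injectivity of g
  have hgval : ∀ x y : ℕ, x < D * q → g x ((y : ℕ) : ZMod (m * K))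
      = (if y % K = (x + 1) % K then 1 else 0) + (if y % K = (x + 1 + D) % K then 1 else 0) := by
    intro x y hx
    rw [hgdef]
    simp only [Pi.add_apply, eSum_eval hK hm]
  have hginj : ∀ x ∈ Finset.range (D * q), ∀ x' ∈ Finset.range (D * q),
      g x = g x' → x = x' := by
    intro x hx x' hx' hgx
    rw [Finset.mem_range] at hx hx'
    by_contra hne
    have hDqK : D * q + D ≤ K := by omega
    have key : ∀ a b : ℕ, a < D * q → b < D * q → g a = g b → a ≠ b → a = b + D := by
      intro a b ha hb hab hneq
      have e1 := congrFun hab ((a + 1 : ℕ) : ZMod (m * K))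
      rw [hgval a _ ha, hgval b _ hb] at e1
      rw [if_pos rfl, if_neg (fun hc => by
          have := win (show 1 ≤ a + 1 by omega) (by omega) (by omega) (by omega) hc
          omega),
        if_neg (fun hc => by
          have := win (show 1 ≤ a + 1 by omega) (by omega) (by omega) (by omega) hc
          omega)] at e1
      by_cases hc2 : (a + 1) % K = (b + 1 + D) % K
      · have := win (show 1 ≤ a + 1 by omega) (by omega) (by omega) (by omega) hc2
        omega
      · rw [if_neg hc2] at e1
        exact absurd e1 (by decide)
    have h1 := key x x' hx hx' hgx hne
    have h2 := key x' x hx' hx hgx.symm (fun hh => hne hh.symm)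
    omega
  -- injectivity of h
  have hppos_of : ∀ i' : ℕ, i' < p → 0 < p := fun i' h => by omega
  have hhval : ∀ i' y : ℕ, i' < p → h i' ((y : ℕ) : ZMod (m * K))
      = (if y % K = (K - 2 * D + 1 + lam + i') % K then 1 else 0)
        + (if y % K = (K - D + 1 + i') % K then 1 else 0)
        + (if y % K = (K - lam + 1 + i' % lam) % K then 1 else 0) := by
    intro i' y hi'
    rw [hhdef]
    simp only [Pi.add_apply, eSum_eval hK hm]
  have hL2 : 0 < p → lam ≤ p := by
    intro hp
    have h1 : lam * 1 < lam * L := by omega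
    have h2 : 1 < L := lt_of_mul_lt_mul_left h1 (Nat.zero_le lam)
    have h3 : lam * 2 ≤ lam * L := Nat.mul_le_mul_left lam h2
    omega
  have hbounds : ∀ i' : ℕ, i' < p →
      (1 ≤ K - 2 * D + 1 + lam + i' ∧ K - 2 * D + 1 + lam + i' ≤ K ∧
       K - 2 * D + 1 + lam + i' = D * q + 1 + i' ∧
       K - D + 1 + i' = D * q + p + 1 + i' ∧
       K - lam + 1 + i' % lam = D * q + 2 * p + 1 + i' % lam ∧
       i' % lam < lam ∧ i' % lam ≤ i') := by
    intro i' hi'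
    have := Nat.mod_lt i' hlam
    have := Nat.mod_le i' lam
    refine ⟨by omega, by omega, by omega, by omega, by omega, by omega, by omega⟩
  have hhinj : ∀ a ∈ Finset.range p, ∀ b ∈ Finset.range p, h a = h b → a = b := by
    intro a ha b hb hab
    rw [Finset.mem_range] at ha hb
    obtain ⟨c1, c2, c3, c4, c5, c6, c7⟩ := hbounds a ha
    obtain ⟨d1, d2, d3, d4, d5, d6, d7⟩ := hbounds b hb
    have hpp := hppos_of a ha
    have hlp := hL2 hpp
    have e1 := congrFun hab ((K - 2 * D + 1 + lam + a : ℕ) : ZMod (m * K))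
    rw [hhval a _ ha, hhval b _ hb] at e1
    rw [if_pos rfl,
      if_neg (fun hc => by
        have := win c1 c2 (by omega) (by omega) hc; omega),
      if_neg (fun hc => by
        have := win c1 c2 (by omega) (by omega) hc; omega)] at e1
    by_cases hc2 : (K - 2 * D + 1 + lam + a) % K = (K - D + 1 + b) % K
    · have := win c1 c2 (by omega) (by omega) hc2; omega
    · rw [if_neg hc2] at e1
      by_cases hc3 : (K - 2 * D + 1 + lam + a) % K = (K - lam + 1 + b % lam) % K
      · have := win c1 c2 (by omega) (by omega) hc3; omega
      · rw [if_neg hc3] at e1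
        by_cases hc1 : (K - 2 * D + 1 + lam + a) % K = (K - 2 * D + 1 + lam + b) % K
        · have := win c1 c2 (by omega) (by omega) hc1; omega
        · rw [if_neg hc1] at e1
          exact absurd e1 (by decide)
  -- disjointness
  have hdisj : Disjoint (Finset.image g (Finset.range (D * q))) (Finset.image h (Finset.range p)) := by
    rw [Finset.disjoint_left]
    rintro v hv hv'
    rw [Finset.mem_image] at hv hv'
    obtain ⟨x, hx, rfl⟩ := hv
    obtain ⟨i', hi', hgh⟩ := hv'
    rw [Finset.mem_range] at hx hi'
    obtain ⟨c1, c2, c3, c4, c5, c6, c7⟩ := hbounds i' hi'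
    have hpp := hppos_of i' hi'
    have hlp := hL2 hpp
    have e1 := congrFun hgh ((K - lam + 1 + i' % lam : ℕ) : ZMod (m * K))
    rw [hgval x _ hx, hhval i' _ hi'] at e1
    rw [if_pos rfl,
      if_neg (fun hc => by
        have := win c1 c2 (by omega) (by omega) hc.symm; omega),
      if_neg (fun hc => by
        have := win (by omega : (1:ℕ) ≤ K - D + 1 + i') (by omega) (by omega) (by omega) hc.symm
        omega)] at e1
    rw [if_neg (fun hc => by
        have := win (by omega : (1:ℕ) ≤ K - lam + 1 + i' % lam) (by omega) (by omega) (by omega) hc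
        omega),
      if_neg (fun hc => by
        have := win (by omega : (1:ℕ) ≤ K - lam + 1 + i' % lam) (by omega) (by omega) (by omega) hc
        omega)] at e1
    exact absurd e1 (by decide)
  constructor
  · rw [hset, Set.ncard_coe_finset, Finset.card_union_of_disjoint hdisj,
      Finset.card_image_of_injOn hginj, Finset.card_image_of_injOn hhinj,
      Finset.card_range, Finset.card_range]
    omega
  · rw [hset]
    exact Finset.finite_toSet _

set_option maxHeartbeats 1000000 in
private lemma lower (K D lam m q p L : ℕ) (hm : 0 < m) (hlam : 0 < lam)
    (hq : 1 ≤ q) (hKe : K = D * q + 2 * p + lam) (hDe : D = p + lam) (hLe : D = lam * L)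
    (C' : Set (ZMod (m * K) → ZMod 2))
    (hC : IsIndexCode (m * K) (classivA K D lam m) C') : K - D ≤ C'.ncard := by
  classical
  have hD : 0 < D := by omega
  have hDq : D ≤ D * q := Nat.le_mul_of_pos_right D hq
  have hK : 0 < K := by omega
  have hKmK : K ≤ m * K := Nat.le_mul_of_pos_left K hm
  haveI : NeZero (m * K) := ⟨(Nat.mul_pos hm hK).ne'⟩
  have hbnd : K - 2 * D + lam = D * q := by omega
  have hDiv : D / lam = L := by rw [hLe]; exact Nat.mul_div_cancel_left L hlam
  have hL1 : 1 ≤ L := by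
    rcases Nat.eq_zero_or_pos L with h | h
    · rw [h, Nat.mul_zero] at hLe; omega
    · exact h
  have hLlam : lam * L = p + lam := by omega
  set KD := D * q + p with hKDdef
  have hKDK : KD < K := by omega
  set emb : Fin KD → ZMod (m * K) := fun t => ((t.val + 1 : ℕ) : ZMod (m * K)) with hembdef
  set π : (ZMod (m * K) → ZMod 2) →ₗ[ZMod 2] (Fin KD → ZMod 2) :=
    LinearMap.funLeft (ZMod 2) (ZMod 2) emb with hπdef
  have hembval : ∀ t : Fin KD, (emb t).val = t.val + 1 := by
    intro t
    rw [hembdef]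
    exact ZMod.val_natCast_of_lt (by have := t.isLt; omega)
  -- main induction
  have key : ∀ c : ℕ, ∀ t : Fin KD, KD - t.val ≤ c →
      Pi.single t (1 : ZMod 2) ∈ Submodule.span (ZMod 2) (⇑π '' C') := by
    intro c
    induction c with
    | zero => intro t ht; exact absurd ht (by have := t.isLt; omega)
    | succ c ih =>
      intro t ht
      set r := t.val + 1 with hrdef
      have hr1 : 1 ≤ r := by omega
      have hrKD : r ≤ KD := by have := t.isLt; omega
      set k : ZMod (m * K) := emb t with hkdef
      have hkval : k.val = r := hembval t
      have hres : resIdx (m * K) K k = r := by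
        rw [resIdx, hkval, Nat.mod_eq_of_lt (by omega), if_neg (by omega)]
      -- helper lemmas for projections of standard vectors
      have hcast : ∀ c0 : ℕ, k + ((c0 : ℕ) : ZMod (m * K)) = ((r + c0 : ℕ) : ZMod (m * K)) := by
        intro c0
        have h1 : ((k.val : ℕ) : ZMod (m * K)) = k := by rw [ZMod.natCast_val, ZMod.cast_id]
        rw [← h1, hkval]
        push_cast
        ring
      have hπapp : ∀ (c0 : ℕ) (t' : Fin KD),
          π (stdVec (m * K) ((r + c0 : ℕ))) t'
            = if (t'.val + 1) = (r + c0) % (m * K) then 1 else 0 := by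
        intro c0 t'
        rw [hπdef]
        show stdVec (m * K) ((r + c0 : ℕ)) (emb t') = _
        rw [stdVec]
        congr 1
        rw [eq_iff_iff]
        constructor
        · intro h
          have h2 := congrArg ZMod.val h
          rwa [hembval, ZMod.val_natCast] at h2
        · intro h
          rw [hembdef]
          rw [ZMod.natCast_eq_natCast_iff]
          show (t'.val + 1) % (m * K) = (r + c0) % (m * K)
          rw [Nat.mod_eq_of_lt (by have := t'.isLt; omega)]
          exact h
      have hzero : ∀ c0 : ℕ, ((r + c0) % (m * K) = 0 ∨ KD < (r + c0) % (m * K)) →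
          π (stdVec (m * K) ((r + c0 : ℕ))) = 0 := by
        intro c0 hc0
        funext t'
        rw [hπapp c0 t']
        rw [if_neg (by have := t'.isLt; omega)]
        rfl
      have hstep : ∀ c0 : ℕ, 0 < (r + c0) % (m * K) → (r + c0) % (m * K) ≤ KD →
          r < (r + c0) % (m * K) →
          π (stdVec (m * K) ((r + c0 : ℕ))) ∈ Submodule.span (ZMod 2) (⇑π '' C') := by
        intro c0 h1 h2 h3
        have heq : π (stdVec (m * K) ((r + c0 : ℕ)))
            = Pi.single (⟨(r + c0) % (m * K) - 1, by omega⟩ : Fin KD) (1 : ZMod 2) := by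
          funext t'
          rw [hπapp c0 t']
          rcases eq_or_ne t' (⟨(r + c0) % (m * K) - 1, by omega⟩ : Fin KD) with he | he
          · rw [he, if_pos (by simp; omega), Pi.single_eq_same]
          · rw [if_neg (fun hcon => he (Fin.ext (by simp; omega))), Pi.single_eq_of_ne he]
        rw [heq]
        exact ih _ (by simp; omega)
      -- projections of antidote vectors lie in the span
      have hanti : ∀ x ∈ classivA K D lam m k,
          π (stdVec (m * K) x) ∈ Submodule.span (ZMod 2) (⇑π '' C') := by
        intro x hx
        have hmsub : (m - 1) * K = m * K - K := by rw [Nat.sub_mul, Nat.one_mul]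
        rw [classivA] at hx
        split at hx
        case isTrue hcls =>
          rw [hres, hbnd] at hcls
          rcases hx with ⟨i, hi1, hi2, rfl⟩ | ⟨i, hi2, rfl⟩
          · have h4 : i * K ≤ (m - 1) * K := Nat.mul_le_mul_right K hi2
            have h5 : 1 * K ≤ i * K := Nat.mul_le_mul_right K hi1
            have hlt : r + i * K < m * K := by omega
            rw [hcast, hzero _ (Or.inr (by rw [Nat.mod_eq_of_lt hlt]; omega))]
            exact zero_mem _
          · have h4 : i * K ≤ (m - 1) * K := Nat.mul_le_mul_right K hi2
            have hle : r + (D + i * K) ≤ m * K := by omega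
            rw [hcast]
            rcases Nat.lt_or_ge (r + (D + i * K)) (m * K) with hlt | hge
            · have hmod : (r + (D + i * K)) % (m * K) = r + (D + i * K) :=
                Nat.mod_eq_of_lt hlt
              by_cases hsm : r + (D + i * K) ≤ KD
              · exact hstep _ (by omega) (by omega) (by omega)
              · rw [hzero _ (Or.inr (by omega))]
                exact zero_mem _
            · have hEq : r + (D + i * K) = m * K := by omega
              rw [hzero _ (Or.inl (by rw [hEq, Nat.mod_self]))]
              exact zero_mem _
        case isFalse hcls =>
          rw [hres, hbnd] at hcls
          rcases hx with ⟨i, hi1, hi2, rfl⟩ | ⟨j, i, hj1, hj2, hi2, rfl⟩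
          · have h4 : i * K ≤ (m - 1) * K := Nat.mul_le_mul_right K hi2
            have h5 : 1 * K ≤ i * K := Nat.mul_le_mul_right K hi1
            have hlt : r + i * K < m * K := by omega
            rw [hcast, hzero _ (Or.inr (by rw [Nat.mod_eq_of_lt hlt]; omega))]
            exact zero_mem _
          · rw [hDiv] at hj2
            have h4 : i * K ≤ (m - 1) * K := Nat.mul_le_mul_right K hi2
            have h5 : j * lam ≤ L * lam := Nat.mul_le_mul_right lam hj2
            have h6 : 1 * lam ≤ j * lam := Nat.mul_le_mul_right lam hj1
            have h7 : L * lam = lam * L := Nat.mul_comm _ _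
            have hle : r + (j * lam + i * K) ≤ m * K := by omega
            rw [hcast]
            rcases Nat.lt_or_ge (r + (j * lam + i * K)) (m * K) with hlt | hge
            · have hmod : (r + (j * lam + i * K)) % (m * K) = r + (j * lam + i * K) :=
                Nat.mod_eq_of_lt hlt
              by_cases hsm : r + (j * lam + i * K) ≤ KD
              · exact hstep _ (by omega) (by omega) (by omega)
              · rw [hzero _ (Or.inr (by omega))]
                exact zero_mem _
            · have hEq : r + (j * lam + i * K) = m * K := by omega
              rw [hzero _ (Or.inl (by rw [hEq, Nat.mod_self]))]
              exact zero_mem _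
      -- project the decoding relation
      have happly := Submodule.apply_mem_span_image_of_mem_span π (hC.2 k)
      rw [Set.image_union] at happly
      have hk0 : k = ((r + 0 : ℕ) : ZMod (m * K)) := by
        have := hcast 0
        simpa using this
      have hmod0 : (r + 0) % (m * K) = r := by
        rw [Nat.add_zero]
        exact Nat.mod_eq_of_lt (by omega)
      have hπstd : π (stdVec (m * K) k) = Pi.single t (1 : ZMod 2) := by
        rw [hk0]
        funext t'
        rw [hπapp 0 t', hmod0]
        rcases eq_or_ne t' t with rfl | he
        · rw [if_pos hrdef.symm, Pi.single_eq_same]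
        · rw [if_neg (fun hcon => he (Fin.ext (by omega))), Pi.single_eq_of_ne he]
      rw [hπstd] at happly
      have himg2 : ⇑π '' (stdVec (m * K) '' classivA K D lam m k) ⊆
          (Submodule.span (ZMod 2) (⇑π '' C') : Set (Fin KD → ZMod 2)) := by
        rintro _ ⟨_, ⟨x, hxA, rfl⟩, rfl⟩
        exact hanti x hxA
      exact (Submodule.span_le.mpr
        (Set.union_subset Submodule.subset_span himg2)) happly
  -- conclude
  have htop : ∀ t : Fin KD, Pi.single t (1 : ZMod 2) ∈ Submodule.span (ZMod 2) (⇑π '' C') :=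
    fun t => key KD t (by omega)
  have hspantop : Submodule.span (ZMod 2) (⇑π '' C') = ⊤ := by
    rw [Submodule.eq_top_iff']
    intro v
    have hv : v = ∑ t : Fin KD, v t • Pi.single t (1 : ZMod 2) := by
      calc v = ∑ i : Fin KD, Pi.single i (v i) := (Finset.univ_sum_single v).symm
        _ = ∑ t : Fin KD, v t • Pi.single t (1 : ZMod 2) :=
          Finset.sum_congr rfl fun t _ => by
            rw [← Pi.single_smul, smul_eq_mul, mul_one]
    rw [hv]
    exact Submodule.sum_mem _ fun t _ => Submodule.smul_mem _ _ (htop t)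
  haveI : Fintype ↥(⇑π '' C') := Set.Finite.fintype (hC.1.image _)
  have h2 := finrank_span_le_card (R := ZMod 2) (⇑π '' C')
  rw [hspantop, finrank_top] at h2
  have h3 : Module.finrank (ZMod 2) (Fin KD → ZMod 2) = KD := by
    rw [Module.finrank_pi]
    simp
  rw [h3] at h2
  have h4 : (⇑π '' C').toFinset.card = (⇑π '' C').ncard :=
    (Set.ncard_eq_toFinset_card' _).symm
  have h5 := Set.ncard_image_le (f := ⇑π) hC.1
  omega


/-- **Class (iv) lifted (Corollary 7).** For `λ ∣ D`, `D ∣ K + λ` and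
`n = (K + λ)/D > 2`, the lifted code is a valid scalar linear index code of optimal
length `K - D` for the lifted Class (iv) problem on `m*K` messages. -/
theorem lifted_code_class_iv (K D lam m : ℕ) (hK : 0 < K) (hD : 0 < D) (hlam : 0 < lam)
    (hm : 0 < m) (hdvd1 : lam ∣ D) (hdvd2 : D ∣ (K + lam)) (hn : 2 < (K + lam) / D) :
    (IsIndexCode (m * K) (classivA K D lam m) (codeClassiv K D lam m) ∧
      (codeClassiv K D lam m).ncard = K - D) ∧
    (∀ C' : Set (ZMod (m * K) → ZMod 2),
      IsIndexCode (m * K) (classivA K D lam m) C' → K - D ≤ C'.ncard) := by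
  have hlamD : lam ≤ D := Nat.le_of_dvd hD hdvd1
  set q := (K + lam) / D - 2 with hqdef
  have hq : 1 ≤ q := by omega
  have hmul : D * ((K + lam) / D) = K + lam := Nat.mul_div_cancel' hdvd2
  have hKe : K = D * q + 2 * (D - lam) + lam := by
    have hx : D * ((K + lam) / D) = D * q + 2 * D := by
      rw [show (K + lam) / D = q + 2 by omega]; ring
    omega
  have hDe : D = (D - lam) + lam := by omega
  have hLe : D = lam * (D / lam) := (Nat.mul_div_cancel' hdvd1).symm
  obtain ⟨hcard, hfin⟩ := count K D lam m q (D - lam) (D / lam) hm hlam hq hKe hDe hLe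
  exact ⟨⟨⟨hfin, fun k => decode K D lam m q (D - lam) (D / lam) hm hlam hq hKe hDe hLe k⟩,
      hcard⟩,
    fun C' hC => lower K D lam m q (D - lam) (D / lam) hm hlam hq hKe hDe hLe C' hC⟩
end
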